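/- Let n > 1, let U ⊂ ℝⁿ∖{0} be an open O(n)-invariant set, I = {|x| : x ∈ U}, and let f : I → (0,∞) be of class C². Set ρ(x+iy) = |y|² − f(|x|)² and Σ = {x+iy : x ∈ U, |y| = f(|x|)}. If for every t ∈ I one has f(t) f'(t)/t > 1 and f(t) ( f''(t) + f'(t)³/t ) > 1, then L_ρ(p;v) < 0 for every p ∈ Σ and every nonzero v ∈ T_p^ℂΣ (i.e. the domain D₊ = {x+iy : x ∈ U, |y| > f(|x|)} is strongly pseudoconvex along Σ). -/

import Mathlib

open Complex Set

/-- The Levi form of a `C²` function `ρ` at `p` in direction `v`: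
`4 L_ρ(p;v) = H_p(v,v) + H_p(iv,iv)` where `H_p` is the second real Fréchet derivative. -/
noncomputable def leviForm {E : Type*} [NormedAddCommGroup E] [NormedSpace ℂ E]
    (ρ : E → ℝ) (p v : E) : ℝ :=
  (iteratedFDeriv ℝ 2 ρ p ![v, v]
    + iteratedFDeriv ℝ 2 ρ p ![Complex.I • v, Complex.I • v]) / 4

/-- The complex tangent space `T_p^ℂΣ = {v : dρ_p(v) = 0 and dρ_p(iv) = 0}`. -/
def complexTangent {E : Type*} [NormedAddCommGroup E] [NormedSpace ℂ E]
    (ρ : E → ℝ) (p : E) : Set E :=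
  {v | fderiv ℝ ρ p v = 0 ∧ fderiv ℝ ρ p (Complex.I • v) = 0}

/-- `ρ(x+iy) = |y|² - f(|x|)²`. -/
noncomputable def rhoF (n : ℕ) (f : ℝ → ℝ) : (Fin n → ℂ) → ℝ :=
  fun z => (∑ j, (z j).im ^ 2) - (f (Real.sqrt (∑ j, (z j).re ^ 2))) ^ 2

/-- The hypersurface `Σ = {x+iy : x ∈ U, |y| = f(|x|)}`. -/
def SigmaSetF (n : ℕ) (U : Set (Fin n → ℝ)) (f : ℝ → ℝ) : Set (Fin n → ℂ) :=
  {z | (fun j => (z j).re) ∈ U ∧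
    Real.sqrt (∑ j, (z j).im ^ 2) = f (Real.sqrt (∑ j, (z j).re ^ 2))}

/-! ### Auxiliary material -/

noncomputable def reP (n : ℕ) (j : Fin n) : (Fin n → ℂ) →L[ℝ] ℝ :=
  Complex.reCLM.comp (ContinuousLinearMap.proj j)

noncomputable def imP (n : ℕ) (j : Fin n) : (Fin n → ℂ) →L[ℝ] ℝ :=
  Complex.imCLM.comp (ContinuousLinearMap.proj j)

lemma hasFDerivAt_sumRe {n : ℕ} (z : Fin n → ℂ) :
    HasFDerivAt (fun w : Fin n → ℂ => ∑ j, (w j).re ^ 2)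
      (∑ j, (2 * (z j).re) • reP n j) z := by
  refine HasFDerivAt.fun_sum fun j _ => ?_
  have h : HasFDerivAt (fun w : Fin n → ℂ => (w j).re) (reP n j) z := (reP n j).hasFDerivAt
  simpa [pow_two, two_mul, add_smul] using h.fun_mul h

lemma hasFDerivAt_sumIm {n : ℕ} (z : Fin n → ℂ) :
    HasFDerivAt (fun w : Fin n → ℂ => ∑ j, (w j).im ^ 2)
      (∑ j, (2 * (z j).im) • imP n j) z := by
  refine HasFDerivAt.fun_sum fun j _ => ?_
  have h : HasFDerivAt (fun w : Fin n → ℂ => (w j).im) (imP n j) z := (imP n j).hasFDerivAt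
  simpa [pow_two, two_mul, add_smul] using h.fun_mul h

noncomputable def Dclm (n : ℕ) (f : ℝ → ℝ) (z : Fin n → ℂ) : (Fin n → ℂ) →L[ℝ] ℝ :=
  (∑ j, (2 * (z j).im) • imP n j)
  - (f (Real.sqrt (∑ j, (z j).re ^ 2)) * deriv f (Real.sqrt (∑ j, (z j).re ^ 2)) /
      Real.sqrt (∑ j, (z j).re ^ 2)) • (∑ j, (2 * (z j).re) • reP n j)

lemma Dclm_apply {n : ℕ} (f : ℝ → ℝ) (z w : Fin n → ℂ) :
    Dclm n f z w = (∑ j, 2 * (z j).im * (w j).im)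
      - (f (Real.sqrt (∑ j, (z j).re ^ 2)) * deriv f (Real.sqrt (∑ j, (z j).re ^ 2)) /
          Real.sqrt (∑ j, (z j).re ^ 2)) * (∑ j, 2 * (z j).re * (w j).re) := by
  simp only [Dclm, ContinuousLinearMap.sub_apply, ContinuousLinearMap.smul_apply,
    ContinuousLinearMap.sum_apply, smul_eq_mul]
  rfl

lemma hasFDerivAt_rhoF {n : ℕ} {f : ℝ → ℝ} {V : Set ℝ} (hV : IsOpen V)
    (hf : ContDiffOn ℝ 2 f V) (z : Fin n → ℂ) (hT : 0 < ∑ j, (z j).re ^ 2)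
    (hu : Real.sqrt (∑ j, (z j).re ^ 2) ∈ V) :
    HasFDerivAt (rhoF n f) (Dclm n f z) z := by
  set T : ℝ := ∑ j, (z j).re ^ 2 with hTdef
  set u : ℝ := Real.sqrt T with hudef
  have hu0 : 0 < u := Real.sqrt_pos.2 hT
  have hfd : HasDerivAt f (deriv f u) u :=
    ((hf.differentiableOn (by norm_num)).differentiableAt (hV.mem_nhds hu)).hasDerivAt
  have h1 : HasDerivAt Real.sqrt (1 / (2 * u)) T := Real.hasDerivAt_sqrt hT.ne'
  have h2 : HasDerivAt (fun s => f (Real.sqrt s)) (deriv f u * (1 / (2 * u))) T :=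
    hfd.comp T h1
  have h3 : HasDerivAt (fun s => (f (Real.sqrt s)) ^ 2)
      ((2 : ℕ) * (f u) ^ 1 * (deriv f u * (1 / (2 * u)))) T := h2.pow 2
  have h4 := h3.comp_hasFDerivAt z (hasFDerivAt_sumRe z)
  have h5 := (hasFDerivAt_sumIm z).sub h4
  have hscal : f u * deriv f u / u = (2 : ℕ) * (f u) ^ 1 * (deriv f u * (1 / (2 * u))) := by
    field_simp
    ring
  rw [Dclm, ← hTdef, ← hudef, hscal]
  exact h5

lemma isOpen_WrhoF {n : ℕ} (V : Set ℝ) (hV : IsOpen V) :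
    IsOpen {z : Fin n → ℂ | 0 < ∑ j, (z j).re ^ 2 ∧ Real.sqrt (∑ j, (z j).re ^ 2) ∈ V} := by
  have hcont : Continuous fun z : Fin n → ℂ => ∑ j, (z j).re ^ 2 := by continuity
  exact (isOpen_lt continuous_const hcont).inter ((hcont.sqrt.isOpen_preimage) V hV)

lemma contDiffOn_rhoF {n : ℕ} {f : ℝ → ℝ} {V : Set ℝ} (hV : IsOpen V)
    (hf : ContDiffOn ℝ 2 f V) :
    ContDiffOn ℝ 2 (rhoF n f)
      {z : Fin n → ℂ | 0 < ∑ j, (z j).re ^ 2 ∧ Real.sqrt (∑ j, (z j).re ^ 2) ∈ V} := by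
  intro z hz
  apply ContDiffAt.contDiffWithinAt
  have hS : ContDiffAt ℝ 2 (fun w : Fin n → ℂ => ∑ j, (w j).im ^ 2) z := by
    exact ContDiffAt.sum fun j _ => ((imP n j).contDiff.pow 2).contDiffAt
  have hT : ContDiffAt ℝ 2 (fun w : Fin n → ℂ => ∑ j, (w j).re ^ 2) z := by
    exact ContDiffAt.sum fun j _ => ((reP n j).contDiff.pow 2).contDiffAt
  have hsq : ContDiffAt ℝ 2 (fun w : Fin n → ℂ => Real.sqrt (∑ j, (w j).re ^ 2)) z :=
    (Real.contDiffAt_sqrt hz.1.ne').comp z hT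
  have hfc : ContDiffAt ℝ 2 (fun w : Fin n → ℂ => f (Real.sqrt (∑ j, (w j).re ^ 2))) z :=
    (hf.contDiffAt (hV.mem_nhds hz.2)).comp z hsq
  exact hS.sub (hfc.pow 2)

lemma second_deriv_eq {E : Type*} [NormedAddCommGroup E] [NormedSpace ℝ E]
    {ρ : E → ℝ} {p : E} (hd : DifferentiableAt ℝ (fderiv ℝ ρ) p) (v : E) :
    iteratedFDeriv ℝ 2 ρ p ![v, v] = deriv (fun t : ℝ => fderiv ℝ ρ (p + t • v) v) 0 := by
  rw [iteratedFDeriv_two_apply]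
  have hline : HasDerivAt (fun t : ℝ => p + t • v) v 0 := by
    simpa using ((hasDerivAt_id (0 : ℝ)).smul_const v).const_add p
  have hd' : HasFDerivAt (fderiv ℝ ρ) (fderiv ℝ (fderiv ℝ ρ) p) ((fun t : ℝ => p + t • v) 0) := by
    simpa using hd.hasFDerivAt
  have h1 := hd'.comp_hasDerivAt 0 hline
  have h2 := (ContinuousLinearMap.apply ℝ ℝ v).hasFDerivAt.comp_hasDerivAt 0 h1
  have h3 : HasDerivAt (fun t : ℝ => fderiv ℝ ρ (p + t • v) v)
      (fderiv ℝ (fderiv ℝ ρ) p v v) 0 := h2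
  exact h3.deriv.symm

lemma hasDerivAt_psi {n : ℕ} {f : ℝ → ℝ} {V : Set ℝ} (hV : IsOpen V)
    (hf : ContDiffOn ℝ 2 f V) (x y c d : Fin n → ℝ)
    (hT : 0 < ∑ j, x j ^ 2) (hrV : Real.sqrt (∑ j, x j ^ 2) ∈ V) :
    HasDerivAt (fun t : ℝ =>
      (∑ j, 2 * (y j + t * d j) * d j) -
        (f (Real.sqrt (∑ j, (x j + t * c j) ^ 2)) *
          deriv f (Real.sqrt (∑ j, (x j + t * c j) ^ 2)) /
          Real.sqrt (∑ j, (x j + t * c j) ^ 2)) * (∑ j, 2 * (x j + t * c j) * c j))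
      (2 * (∑ j, d j ^ 2)
        - (2 * (((deriv f (Real.sqrt (∑ j, x j ^ 2))) ^ 2
            + f (Real.sqrt (∑ j, x j ^ 2)) * deriv (deriv f) (Real.sqrt (∑ j, x j ^ 2)))
              * Real.sqrt (∑ j, x j ^ 2)
            - f (Real.sqrt (∑ j, x j ^ 2)) * deriv f (Real.sqrt (∑ j, x j ^ 2)))
            / (Real.sqrt (∑ j, x j ^ 2)) ^ 3) * (∑ j, x j * c j) ^ 2
        - (f (Real.sqrt (∑ j, x j ^ 2)) * deriv f (Real.sqrt (∑ j, x j ^ 2)) /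
            Real.sqrt (∑ j, x j ^ 2)) * (2 * (∑ j, c j ^ 2))) 0 := by
  set r : ℝ := Real.sqrt (∑ j, x j ^ 2) with hrdef
  have hr0 : 0 < r := Real.sqrt_pos.2 hT
  have hQ0 : (∑ j, (x j + 0 * c j) ^ 2) = ∑ j, x j ^ 2 := by simp
  set C : ℝ := ∑ j, 2 * (x j + 0 * c j) ^ 1 * c j with hCdef
  have hQ : HasDerivAt (fun t : ℝ => ∑ j, (x j + t * c j) ^ 2) C 0 := by
    refine HasDerivAt.fun_sum fun j _ => ?_
    exact ((hasDerivAt_mul_const (c j)).const_add (x j)).pow 2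
  have hsq : HasDerivAt (fun t : ℝ => Real.sqrt (∑ j, (x j + t * c j) ^ 2))
      (1 / (2 * r) * C) 0 := by
    have h := (Real.hasDerivAt_sqrt (x := ∑ j, (x j + 0 * c j) ^ 2)
      (by rw [hQ0]; exact hT.ne')).comp 0 hQ
    simpa [Function.comp_def, hQ0, ← hrdef] using h
  have hfd : HasDerivAt f (deriv f r) r :=
    ((hf.differentiableOn (by norm_num)).differentiableAt (hV.mem_nhds hrV)).hasDerivAt
  have hfd2 : HasDerivAt (deriv f) (deriv (deriv f) r) r :=
    (((hf.deriv_of_isOpen hV (m := 1) (by norm_num)).differentiableOn (by norm_num)).differentiableAt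
      (hV.mem_nhds hrV)).hasDerivAt
  have hval : Real.sqrt (∑ j, (x j + 0 * c j) ^ 2) = r := by rw [hQ0]
  have hfu : HasDerivAt (fun t : ℝ => f (Real.sqrt (∑ j, (x j + t * c j) ^ 2)))
      (deriv f r * (1 / (2 * r) * C)) 0 := by
    have h := HasDerivAt.comp 0 (hval ▸ hfd) hsq
    simpa [Function.comp_def, ← hrdef] using h
  have hfu2 : HasDerivAt (fun t : ℝ => deriv f (Real.sqrt (∑ j, (x j + t * c j) ^ 2)))
      (deriv (deriv f) r * (1 / (2 * r) * C)) 0 := by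
    have h := HasDerivAt.comp 0 (hval ▸ hfd2) hsq
    simpa [Function.comp_def, ← hrdef] using h
  have hN := hfu.fun_mul hfu2
  have hm := hN.fun_div hsq (by rw [hval]; exact hr0.ne')
  have hQ2 : HasDerivAt (fun t : ℝ => ∑ j, 2 * (x j + t * c j) * c j)
      (∑ j, 2 * c j * c j) 0 := by
    refine HasDerivAt.fun_sum fun j _ => ?_
    exact (((hasDerivAt_mul_const (c j)).const_add (x j)).const_mul 2).mul_const (c j)
  have hP : HasDerivAt (fun t : ℝ => ∑ j, 2 * (y j + t * d j) * d j)
      (∑ j, 2 * d j * d j) 0 := by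
    refine HasDerivAt.fun_sum fun j _ => ?_
    exact (((hasDerivAt_mul_const (d j)).const_add (y j)).const_mul 2).mul_const (d j)
  have h := hP.fun_sub (hm.fun_mul hQ2)
  refine h.congr_deriv ?_
  symm
  have hC : C = 2 * ∑ j, x j * c j := by
    rw [hCdef, Finset.mul_sum]; exact Finset.sum_congr rfl fun j _ => by ring
  simp only [hval, hQ0, ← hrdef, hC]
  have h2 : (∑ j, 2 * (x j + 0 * c j) * c j) = 2 * ∑ j, x j * c j := by
    rw [Finset.mul_sum]; exact Finset.sum_congr rfl fun j _ => by ring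
  have h3 : (∑ j, 2 * d j * d j) = 2 * ∑ j, d j ^ 2 := by
    rw [Finset.mul_sum]; exact Finset.sum_congr rfl fun j _ => by ring
  have h4 : (∑ j, 2 * c j * c j) = 2 * ∑ j, c j ^ 2 := by
    rw [Finset.mul_sum]; exact Finset.sum_congr rfl fun j _ => by ring
  rw [h2, h3, h4]
  field_simp
  ring

lemma proj_ineq {n : ℕ} (u e₁ e₂ : Fin n → ℝ) (he : ∑ j, e₁ j * e₂ j = 0)
    (h₁ : 0 < ∑ j, e₁ j ^ 2) (h₂ : 0 < ∑ j, e₂ j ^ 2) :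
    (∑ j, e₂ j ^ 2) * (∑ j, e₁ j * u j) ^ 2 + (∑ j, e₁ j ^ 2) * (∑ j, e₂ j * u j) ^ 2 ≤
      (∑ j, e₁ j ^ 2) * (∑ j, e₂ j ^ 2) * (∑ j, u j ^ 2) := by
  set c₁ := ∑ j, e₁ j ^ 2 with hc₁
  set c₂ := ∑ j, e₂ j ^ 2 with hc₂
  set P := ∑ j, e₁ j * u j with hP
  set Q := ∑ j, e₂ j * u j with hQ
  have h0 : 0 ≤ ∑ j, (c₁ * c₂ * u j - c₂ * P * e₁ j - c₁ * Q * e₂ j) ^ 2 :=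
    Finset.sum_nonneg fun j _ => sq_nonneg _
  have hexp : ∑ j, (c₁ * c₂ * u j - c₂ * P * e₁ j - c₁ * Q * e₂ j) ^ 2 =
      c₁ ^ 2 * c₂ ^ 2 * (∑ j, u j ^ 2) + c₂ ^ 2 * P ^ 2 * c₁ + c₁ ^ 2 * Q ^ 2 * c₂
        - 2 * c₁ * c₂ ^ 2 * P * P - 2 * c₁ ^ 2 * c₂ * Q * Q
        + 2 * c₁ * c₂ * P * Q * (∑ j, e₁ j * e₂ j) := by
    have step : ∑ j, (c₁ * c₂ * u j - c₂ * P * e₁ j - c₁ * Q * e₂ j) ^ 2 =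
        ∑ j, (c₁ ^ 2 * c₂ ^ 2 * u j ^ 2 + c₂ ^ 2 * P ^ 2 * e₁ j ^ 2 + c₁ ^ 2 * Q ^ 2 * e₂ j ^ 2
          - 2 * c₁ * c₂ ^ 2 * P * (e₁ j * u j) - 2 * c₁ ^ 2 * c₂ * Q * (e₂ j * u j)
          + 2 * c₁ * c₂ * P * Q * (e₁ j * e₂ j)) :=
      Finset.sum_congr rfl fun j _ => by ring
    rw [step]
    simp only [Finset.sum_add_distrib, Finset.sum_sub_distrib, ← Finset.mul_sum]
    rw [← hc₁, ← hc₂, ← hP, ← hQ]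
  rw [he] at hexp
  nlinarith [mul_pos h₁ h₂, h0, hexp]

lemma final_algebra (F f' f'' r k K2 Sv A B : ℝ) (hr : 0 < r) (hF : 0 < F)
    (hk : k = F * f' / r) (hK2 : K2 = 2 * ((f' ^ 2 + F * f'') * r - F * f') / r ^ 3)
    (hk1 : 1 < k) (h2 : 1 < F * (f'' + f' ^ 3 / r)) (hSv : 0 < Sv)
    (hcs : (A ^ 2 + B ^ 2) * (F ^ 2 + (k * r) ^ 2) ≤ Sv * (r ^ 2 * F ^ 2)) :
    (2 - 2 * k) * Sv - K2 * (A ^ 2 + B ^ 2) < 0 := by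
  have hs0 : 0 ≤ A ^ 2 + B ^ 2 := by positivity
  rcases le_or_gt 0 K2 with hK | hK
  · nlinarith [mul_pos hSv (sub_pos.2 hk1), mul_nonneg hK hs0]
  · have hbr : (2 - 2 * k) * (F ^ 2 + (k * r) ^ 2) - K2 * (r ^ 2 * F ^ 2)
        = 2 * F ^ 2 * (1 - F * (f'' + f' ^ 3 / r)) := by
      rw [hk, hK2]; field_simp; ring
    have hbrneg : (2 - 2 * k) * (F ^ 2 + (k * r) ^ 2) - K2 * (r ^ 2 * F ^ 2) < 0 := by
      rw [hbr]
      have : 1 - F * (f'' + f' ^ 3 / r) < 0 := by linarith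
      nlinarith [sq_nonneg F, mul_pos hF hF]
    have h5 : (-K2) * ((A ^ 2 + B ^ 2) * (F ^ 2 + (k * r) ^ 2))
        ≤ (-K2) * (Sv * (r ^ 2 * F ^ 2)) :=
      mul_le_mul_of_nonneg_left hcs (by linarith)
    have hpos : 0 < F ^ 2 + (k * r) ^ 2 := by positivity
    have h6 : Sv * ((2 - 2 * k) * (F ^ 2 + (k * r) ^ 2) - K2 * (r ^ 2 * F ^ 2)) < 0 :=
      mul_neg_of_pos_of_neg hSv hbrneg
    nlinarith [h5, h6, hpos]

set_option maxHeartbeats 1000000 in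
lemma cs_bound {n : ℕ} (x y a b : Fin n → ℝ) (k F : ℝ)
    (hT : 0 < ∑ j, x j ^ 2) (hk : 0 < k)
    (hyF : (∑ j, y j ^ 2) = F ^ 2)
    (eq1 : (∑ j, y j * b j) = k * ∑ j, x j * a j)
    (eq2 : (∑ j, y j * a j) = -(k * ∑ j, x j * b j)) :
    ((∑ j, x j * a j) ^ 2 + (∑ j, x j * b j) ^ 2) * (F ^ 2 + k ^ 2 * (∑ j, x j ^ 2))
      ≤ ((∑ j, a j ^ 2) + ∑ j, b j ^ 2) * ((∑ j, x j ^ 2) * F ^ 2) := by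
  set R2 := ∑ j, x j ^ 2 with hR2
  set μ := ∑ j, x j * y j with hμ
  set A := ∑ j, x j * a j with hA
  set B := ∑ j, x j * b j with hB
  set e : Fin n → ℝ := fun j => R2 * y j - μ * x j with he_def
  have hF2 : 0 ≤ F ^ 2 := sq_nonneg F
  have hSa0 : (0:ℝ) ≤ ∑ j, a j ^ 2 := Finset.sum_nonneg fun j _ => sq_nonneg _
  have hSb0 : (0:ℝ) ≤ ∑ j, b j ^ 2 := Finset.sum_nonneg fun j _ => sq_nonneg _
  have he : ∑ j, x j * e j = 0 := by
    have step : ∑ j, x j * e j = ∑ j, (R2 * (x j * y j) - μ * (x j ^ 2)) :=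
      Finset.sum_congr rfl fun j _ => by rw [he_def]; ring
    rw [step]
    simp only [Finset.sum_sub_distrib, ← Finset.mul_sum]
    rw [← hμ, ← hR2]
    ring
  have hc2 : ∑ j, e j ^ 2 = R2 * (R2 * F ^ 2 - μ ^ 2) := by
    have step : ∑ j, e j ^ 2 = ∑ j, (R2 ^ 2 * (y j ^ 2) - 2 * R2 * μ * (x j * y j)
        + μ ^ 2 * (x j ^ 2)) :=
      Finset.sum_congr rfl fun j _ => by rw [he_def]; ring
    rw [step]
    simp only [Finset.sum_add_distrib, Finset.sum_sub_distrib, ← Finset.mul_sum]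
    rw [← hμ, ← hR2, hyF]
    ring
  have hea : ∑ j, e j * a j = R2 * (-(k * B)) - μ * A := by
    have step : ∑ j, e j * a j = ∑ j, (R2 * (y j * a j) - μ * (x j * a j)) :=
      Finset.sum_congr rfl fun j _ => by rw [he_def]; ring
    rw [step]
    simp only [Finset.sum_sub_distrib, ← Finset.mul_sum]
    rw [eq2]
  have heb : ∑ j, e j * b j = R2 * (k * A) - μ * B := by
    have step : ∑ j, e j * b j = ∑ j, (R2 * (y j * b j) - μ * (x j * b j)) :=
      Finset.sum_congr rfl fun j _ => by rw [he_def]; ring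
    rw [step]
    simp only [Finset.sum_sub_distrib, ← Finset.mul_sum]
    rw [eq1]
  have hc2nn : 0 ≤ ∑ j, e j ^ 2 := Finset.sum_nonneg fun j _ => sq_nonneg _
  rcases eq_or_lt_of_le hc2nn with hzero | hpos
  · -- degenerate case: y parallel to x
    have hall : ∀ j, e j = 0 := by
      intro j
      have h := (Finset.sum_eq_zero_iff_of_nonneg (fun i _ => sq_nonneg (e i))).1
        hzero.symm j (Finset.mem_univ j)
      exact (pow_eq_zero_iff two_ne_zero).1 h
    have h1 : R2 * (∑ j, y j * b j) = μ * B := by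
      rw [Finset.mul_sum, hB, Finset.mul_sum]
      refine Finset.sum_congr rfl fun j _ => ?_
      have := hall j
      rw [he_def] at this
      simp only at this
      linear_combination (b j) * this
    have h2 : R2 * (∑ j, y j * a j) = μ * A := by
      rw [Finset.mul_sum, hA, Finset.mul_sum]
      refine Finset.sum_congr rfl fun j _ => ?_
      have := hall j
      rw [he_def] at this
      simp only at this
      linear_combination (a j) * this
    rw [eq1] at h1
    rw [eq2] at h2
    have hzero2 : (R2 * k) * (A ^ 2 + B ^ 2) = 0 := by linear_combination A * h1 - B * h2
    have hAB : A ^ 2 + B ^ 2 = 0 := by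
      rcases mul_eq_zero.1 hzero2 with h | h
      · exact absurd h (by positivity)
      · exact h
    rw [hAB, zero_mul]
    exact mul_nonneg (add_nonneg hSa0 hSb0) (mul_nonneg hT.le hF2)
  · have pa := proj_ineq a x e he hT hpos
    have pb := proj_ineq b x e he hT hpos
    rw [hc2, hea, ← hA, ← hR2] at pa
    rw [hc2, heb, ← hB, ← hR2] at pb
    have h0 : 0 ≤ R2 ^ 2 * (μ ^ 2 * ((∑ j, a j ^ 2) + ∑ j, b j ^ 2)) := by positivity
    have hL : (R2 * (R2 * F ^ 2 - μ ^ 2)) * A ^ 2 + R2 * (R2 * (-(k * B)) - μ * A) ^ 2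
        + ((R2 * (R2 * F ^ 2 - μ ^ 2)) * B ^ 2 + R2 * (R2 * (k * A) - μ * B) ^ 2)
        = R2 ^ 2 * ((A ^ 2 + B ^ 2) * (F ^ 2 + k ^ 2 * R2)) := by ring
    have hRle : R2 * (R2 * (R2 * F ^ 2 - μ ^ 2)) * (∑ j, a j ^ 2)
        + R2 * (R2 * (R2 * F ^ 2 - μ ^ 2)) * (∑ j, b j ^ 2)
        ≤ R2 ^ 2 * (((∑ j, a j ^ 2) + ∑ j, b j ^ 2) * (R2 * F ^ 2)) := by
      linarith [h0]
    have hfinal : R2 ^ 2 * ((A ^ 2 + B ^ 2) * (F ^ 2 + k ^ 2 * R2))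
        ≤ R2 ^ 2 * (((∑ j, a j ^ 2) + ∑ j, b j ^ 2) * (R2 * F ^ 2)) := by
      linarith [pa, pb, hL, hRle]
    exact le_of_mul_le_mul_left hfinal (by positivity)

lemma mul_sum_two {n : ℕ} (g h : Fin n → ℝ) :
    (∑ j, 2 * g j * h j) = 2 * ∑ j, g j * h j := by
  rw [Finset.mul_sum]; exact Finset.sum_congr rfl fun j _ => by ring

set_option maxHeartbeats 1000000 in
theorem stmt_6 {n : ℕ} (hn : 1 < n)
    (U : Set (Fin n → ℝ)) (hUne : U.Nonempty) (hUopen : IsOpen U)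
    (hU0 : (0 : Fin n → ℝ) ∉ U)
    (hUinv : ∀ x x' : Fin n → ℝ, x ∈ U → (∑ j, x' j ^ 2) = (∑ j, x j ^ 2) → x' ∈ U)
    (f : ℝ → ℝ) (V : Set ℝ) (hV : IsOpen V)
    (hIV : {t : ℝ | ∃ x ∈ U, t = Real.sqrt (∑ j, x j ^ 2)} ⊆ V)
    (hf : ContDiffOn ℝ 2 f V)
    (hfpos : ∀ t ∈ {t : ℝ | ∃ x ∈ U, t = Real.sqrt (∑ j, x j ^ 2)}, 0 < f t)
    (hineq : ∀ t ∈ {t : ℝ | ∃ x ∈ U, t = Real.sqrt (∑ j, x j ^ 2)},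
      1 < f t * deriv f t / t ∧
      1 < f t * (deriv (deriv f) t + (deriv f t) ^ 3 / t)) :
    ∀ p ∈ SigmaSetF n U f, ∀ v ∈ complexTangent (rhoF n f) p, v ≠ 0 →
      leviForm (rhoF n f) p v < 0 := by
  intro p hp v hv hv0
  obtain ⟨hxU, hynorm⟩ := hp
  -- positivity of ∑ x²
  have hxne : (fun j => (p j).re) ≠ 0 := fun h => hU0 (h ▸ hxU)
  have hT : 0 < ∑ j, (p j).re ^ 2 := by
    obtain ⟨j, hj⟩ := Function.ne_iff.1 hxne
    exact Finset.sum_pos' (fun i _ => sq_nonneg _)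
      ⟨j, Finset.mem_univ j, pow_two_pos_of_ne_zero hj⟩
  have hr0 : 0 < Real.sqrt (∑ j, (p j).re ^ 2) := Real.sqrt_pos.2 hT
  have hrI : Real.sqrt (∑ j, (p j).re ^ 2) ∈
      {t : ℝ | ∃ x ∈ U, t = Real.sqrt (∑ j, x j ^ 2)} := ⟨_, hxU, rfl⟩
  have hrV : Real.sqrt (∑ j, (p j).re ^ 2) ∈ V := hIV hrI
  have hF : 0 < f (Real.sqrt (∑ j, (p j).re ^ 2)) := hfpos _ hrI
  obtain ⟨hin1, hin2⟩ := hineq _ hrI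
  have hrr : (Real.sqrt (∑ j, (p j).re ^ 2)) ^ 2 = ∑ j, (p j).re ^ 2 :=
    Real.sq_sqrt hT.le
  have hyy : (∑ j, (p j).im ^ 2) = (f (Real.sqrt (∑ j, (p j).re ^ 2))) ^ 2 := by
    have h := congrArg (fun s : ℝ => s ^ 2) hynorm
    rwa [Real.sq_sqrt (Finset.sum_nonneg fun j _ => sq_nonneg _)] at h
  -- W and fderiv
  have hWopen := isOpen_WrhoF (n := n) V hV
  have hpW : p ∈ {z : Fin n → ℂ | 0 < ∑ j, (z j).re ^ 2 ∧
      Real.sqrt (∑ j, (z j).re ^ 2) ∈ V} := ⟨hT, hrV⟩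
  have hfderiv : fderiv ℝ (rhoF n f) p = Dclm n f p :=
    (hasFDerivAt_rhoF hV hf p hT hrV).fderiv
  -- components of I • v
  have hIre : ∀ j, ((Complex.I • v) j).re = -(v j).im := by
    intro j
    simp [Pi.smul_apply, smul_eq_mul, Complex.mul_re]
  have hIim : ∀ j, ((Complex.I • v) j).im = (v j).re := by
    intro j
    simp [Pi.smul_apply, smul_eq_mul, Complex.mul_im]
  -- tangency equations
  have ht1 := hv.1
  have ht2 := hv.2
  rw [hfderiv, Dclm_apply] at ht1 ht2
  rw [mul_sum_two, mul_sum_two] at ht1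
  have eq1 : (∑ j, (p j).im * (v j).im)
      = (f (Real.sqrt (∑ j, (p j).re ^ 2)) * deriv f (Real.sqrt (∑ j, (p j).re ^ 2)) /
          Real.sqrt (∑ j, (p j).re ^ 2)) * ∑ j, (p j).re * (v j).re := by linarith
  have hIs1 : (∑ j, 2 * (p j).im * ((Complex.I • v) j).im)
      = 2 * ∑ j, (p j).im * (v j).re := by
    simp only [hIim]; exact mul_sum_two _ _
  have hIs2 : (∑ j, 2 * (p j).re * ((Complex.I • v) j).re)
      = -(2 * ∑ j, (p j).re * (v j).im) := by
    simp only [hIre]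
    rw [show (∑ j, 2 * (p j).re * -(v j).im) = ∑ j, -(2 * ((p j).re * (v j).im)) from
      Finset.sum_congr rfl fun j _ => by ring, Finset.sum_neg_distrib, ← Finset.mul_sum]
  rw [hIs1, hIs2] at ht2
  have eq2 : (∑ j, (p j).im * (v j).re)
      = -((f (Real.sqrt (∑ j, (p j).re ^ 2)) * deriv f (Real.sqrt (∑ j, (p j).re ^ 2)) /
          Real.sqrt (∑ j, (p j).re ^ 2)) * ∑ j, (p j).re * (v j).im) := by
    have := ht2
    nlinarith [this]
  -- second derivatives
  have hC2 := contDiffOn_rhoF (n := n) hV hf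
  have hfd1 : ContDiffOn ℝ 1 (fderiv ℝ (rhoF n f))
      {z : Fin n → ℂ | 0 < ∑ j, (z j).re ^ 2 ∧ Real.sqrt (∑ j, (z j).re ^ 2) ∈ V} :=
    hC2.fderiv_of_isOpen hWopen (by norm_num)
  have hdiff : DifferentiableAt ℝ (fderiv ℝ (rhoF n f)) p :=
    (hfd1.differentiableOn one_ne_zero).differentiableAt (hWopen.mem_nhds hpW)
  have key : ∀ w : Fin n → ℂ, iteratedFDeriv ℝ 2 (rhoF n f) p ![w, w]
      = 2 * (∑ j, (w j).im ^ 2)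
        - (2 * (((deriv f (Real.sqrt (∑ j, (p j).re ^ 2))) ^ 2
            + f (Real.sqrt (∑ j, (p j).re ^ 2)) *
              deriv (deriv f) (Real.sqrt (∑ j, (p j).re ^ 2)))
              * Real.sqrt (∑ j, (p j).re ^ 2)
            - f (Real.sqrt (∑ j, (p j).re ^ 2)) * deriv f (Real.sqrt (∑ j, (p j).re ^ 2)))
            / (Real.sqrt (∑ j, (p j).re ^ 2)) ^ 3) * (∑ j, (p j).re * (w j).re) ^ 2
        - (f (Real.sqrt (∑ j, (p j).re ^ 2)) * deriv f (Real.sqrt (∑ j, (p j).re ^ 2)) /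
            Real.sqrt (∑ j, (p j).re ^ 2)) * (2 * (∑ j, (w j).re ^ 2)) := by
    intro w
    rw [second_deriv_eq hdiff w]
    have hre : ∀ (t : ℝ) (j : Fin n), ((p + t • w) j).re = (p j).re + t * (w j).re := by
      intro t j
      simp [Pi.smul_apply, Complex.smul_re]
    have him : ∀ (t : ℝ) (j : Fin n), ((p + t • w) j).im = (p j).im + t * (w j).im := by
      intro t j
      simp [Pi.smul_apply, Complex.smul_im]
    have hcont : Continuous fun t : ℝ => p + t • w :=
      continuous_const.add (continuous_id.smul continuous_const)
    have hevmem : ∀ᶠ t : ℝ in nhds 0, (p + t • w) ∈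
        {z : Fin n → ℂ | 0 < ∑ j, (z j).re ^ 2 ∧ Real.sqrt (∑ j, (z j).re ^ 2) ∈ V} :=
      hcont.continuousAt.eventually_mem (by simpa using hWopen.mem_nhds hpW)
    have hev : (fun t : ℝ => fderiv ℝ (rhoF n f) (p + t • w) w) =ᶠ[nhds 0]
        (fun t : ℝ => (∑ j, 2 * ((p j).im + t * (w j).im) * (w j).im) -
          (f (Real.sqrt (∑ j, ((p j).re + t * (w j).re) ^ 2)) *
            deriv f (Real.sqrt (∑ j, ((p j).re + t * (w j).re) ^ 2)) /
            Real.sqrt (∑ j, ((p j).re + t * (w j).re) ^ 2)) *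
            (∑ j, 2 * ((p j).re + t * (w j).re) * (w j).re)) := by
      filter_upwards [hevmem] with t ht
      rw [(hasFDerivAt_rhoF hV hf _ ht.1 ht.2).fderiv, Dclm_apply]
      simp only [hre, him]
    rw [hev.deriv_eq]
    exact (hasDerivAt_psi hV hf (fun j => (p j).re) (fun j => (p j).im)
      (fun j => (w j).re) (fun j => (w j).im) hT hrV).deriv
  have kv := key v
  have kiv := key (Complex.I • v)
  have hs1 : (∑ j, (p j).re * ((Complex.I • v) j).re)
      = -(∑ j, (p j).re * (v j).im) := by
    simp only [hIre]
    rw [show (∑ j, (p j).re * -(v j).im) = ∑ j, -((p j).re * (v j).im) from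
      Finset.sum_congr rfl fun j _ => by ring, Finset.sum_neg_distrib]
  have hs2 : (∑ j, ((Complex.I • v) j).re ^ 2) = ∑ j, (v j).im ^ 2 := by
    simp only [hIre]; exact Finset.sum_congr rfl fun j _ => by rw [neg_sq]
  have hs3 : (∑ j, ((Complex.I • v) j).im ^ 2) = ∑ j, (v j).re ^ 2 := by
    simp only [hIim]
  rw [hs1, hs2, hs3, neg_sq] at kiv
  -- positivity of |v|²
  have hSa0 : (0:ℝ) ≤ ∑ j, (v j).re ^ 2 := Finset.sum_nonneg fun j _ => sq_nonneg _
  have hSb0 : (0:ℝ) ≤ ∑ j, (v j).im ^ 2 := Finset.sum_nonneg fun j _ => sq_nonneg _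
  have hSv : 0 < (∑ j, (v j).re ^ 2) + ∑ j, (v j).im ^ 2 := by
    obtain ⟨j0, hj0⟩ : ∃ j, v j ≠ 0 := by
      by_contra h
      push_neg at h
      exact hv0 (funext h)
    have hre0 : (v j0).re ≠ 0 ∨ (v j0).im ≠ 0 := by
      by_contra h
      push_neg at h
      exact hj0 (Complex.ext h.1 h.2)
    have hle1 : (v j0).re ^ 2 ≤ ∑ j, (v j).re ^ 2 :=
      Finset.single_le_sum (f := fun j => (v j).re ^ 2) (fun i _ => sq_nonneg _)
        (Finset.mem_univ j0)
    have hle2 : (v j0).im ^ 2 ≤ ∑ j, (v j).im ^ 2 :=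
      Finset.single_le_sum (f := fun j => (v j).im ^ 2) (fun i _ => sq_nonneg _)
        (Finset.mem_univ j0)
    rcases hre0 with h | h
    · nlinarith [pow_two_pos_of_ne_zero h]
    · nlinarith [pow_two_pos_of_ne_zero h]
  -- Cauchy–Schwarz type bound
  have hcs : ((∑ j, (p j).re * (v j).re) ^ 2 + (∑ j, (p j).re * (v j).im) ^ 2) *
      ((f (Real.sqrt (∑ j, (p j).re ^ 2))) ^ 2 +
        ((f (Real.sqrt (∑ j, (p j).re ^ 2)) * deriv f (Real.sqrt (∑ j, (p j).re ^ 2)) /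
          Real.sqrt (∑ j, (p j).re ^ 2)) * Real.sqrt (∑ j, (p j).re ^ 2)) ^ 2)
      ≤ ((∑ j, (v j).re ^ 2) + ∑ j, (v j).im ^ 2) *
        ((Real.sqrt (∑ j, (p j).re ^ 2)) ^ 2 * (f (Real.sqrt (∑ j, (p j).re ^ 2))) ^ 2) := by
    have hcs' := cs_bound (fun j => (p j).re) (fun j => (p j).im)
      (fun j => (v j).re) (fun j => (v j).im)
      (f (Real.sqrt (∑ j, (p j).re ^ 2)) * deriv f (Real.sqrt (∑ j, (p j).re ^ 2)) /
        Real.sqrt (∑ j, (p j).re ^ 2))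
      (f (Real.sqrt (∑ j, (p j).re ^ 2))) hT (lt_trans zero_lt_one hin1) hyy eq1 eq2
    rw [mul_pow, hrr]
    exact hcs'
  -- conclusion
  show (iteratedFDeriv ℝ 2 (rhoF n f) p ![v, v]
    + iteratedFDeriv ℝ 2 (rhoF n f) p ![Complex.I • v, Complex.I • v]) / 4 < 0
  rw [kv, kiv]
  have hfin := final_algebra (f (Real.sqrt (∑ j, (p j).re ^ 2)))
    (deriv f (Real.sqrt (∑ j, (p j).re ^ 2)))
    (deriv (deriv f) (Real.sqrt (∑ j, (p j).re ^ 2)))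
    (Real.sqrt (∑ j, (p j).re ^ 2))
    (f (Real.sqrt (∑ j, (p j).re ^ 2)) * deriv f (Real.sqrt (∑ j, (p j).re ^ 2)) /
      Real.sqrt (∑ j, (p j).re ^ 2))
    (2 * (((deriv f (Real.sqrt (∑ j, (p j).re ^ 2))) ^ 2
        + f (Real.sqrt (∑ j, (p j).re ^ 2)) *
          deriv (deriv f) (Real.sqrt (∑ j, (p j).re ^ 2)))
        * Real.sqrt (∑ j, (p j).re ^ 2)
      - f (Real.sqrt (∑ j, (p j).re ^ 2)) * deriv f (Real.sqrt (∑ j, (p j).re ^ 2)))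
      / (Real.sqrt (∑ j, (p j).re ^ 2)) ^ 3)
    ((∑ j, (v j).re ^ 2) + ∑ j, (v j).im ^ 2)
    (∑ j, (p j).re * (v j).re) (∑ j, (p j).re * (v j).im)
    hr0 hF rfl rfl hin1 hin2 hSv (by
      have := hcs
      nlinarith [this])
  linarith [hfin]
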